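/- Any two (3,3)-nets in P^2(C) each of which has exactly 9 double points (equivalently, whose only triple points are the 9 mixed triple points) are lattice isomorphic; this common lattice is that of the Hesse arrangement, the union of three of the four singular fibers of the Hesse pencil a(x^3+y^3+z^3)+bxyz. -/

import Mathlib

open scoped Classical

noncomputable section

/-- The complex projective plane `P²(ℂ)`. -/
abbrev ProjPlane : Type := Projectivization ℂ (Fin 3 → ℂ)

/-- A subset of `P²(ℂ)` is a projective line if it is the zero locus of a nonzero
linear form. -/
def IsProjLine (S : Set ProjPlane) : Prop :=
  ∃ f : (Fin 3 → ℂ) →ₗ[ℂ] ℂ, f ≠ 0 ∧ S = {p : ProjPlane | f p.rep = 0}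

/-- The lines of the arrangement `A` passing through the point `p`. -/
def linesThrough (A : Finset (Set ProjPlane)) (p : ProjPlane) : Finset (Set ProjPlane) :=
  A.filter fun L => p ∈ L

/-- The multiplicity of a point `p` with respect to the arrangement `A`. -/
def mult (A : Finset (Set ProjPlane)) (p : ProjPlane) : ℕ :=
  (linesThrough A p).card

/-- `p` is a multiple point of the arrangement `A` (at least two lines pass through it). -/
def IsMultPoint (A : Finset (Set ProjPlane)) (p : ProjPlane) : Prop :=
  2 ≤ mult A p

/-- A `q`-cocycle of the line arrangement `A`: for every multiple point `p`,
if `q` divides the multiplicity then the values of `η` on the lines through `p` sum to `0`,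
and otherwise `η` is constant on the lines through `p`. -/
def IsCocycle (q : ℕ) (A : Finset (Set ProjPlane)) (η : Set ProjPlane → ZMod q) : Prop :=
  ∀ p : ProjPlane, IsMultPoint A p →
    ((q ∣ mult A p → ∑ L ∈ linesThrough A p, η L = 0) ∧
     (¬ q ∣ mult A p → ∀ L ∈ linesThrough A p, ∀ K ∈ linesThrough A p, η L = η K))

/-- A function on lines is non-constant on the arrangement `A`. -/
def NonConstant {α : Type*} (A : Finset (Set ProjPlane)) (η : Set ProjPlane → α) : Prop :=
  ∃ L ∈ A, ∃ K ∈ A, η L ≠ η K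

/-- A `(k,q)`-net structure on the line arrangement `A`, with classes `C 0, …, C (k-1)`:
the classes partition `A` into `k` classes of `q` lines each, and whenever two lines from
different classes meet, their intersection point lies on exactly one line of each class. -/
def IsNet (k q : ℕ) (A : Finset (Set ProjPlane)) (C : Fin k → Finset (Set ProjPlane)) : Prop :=
  (∀ L ∈ A, IsProjLine L) ∧
  A.card = k * q ∧
  (∀ i, (C i).card = q) ∧
  (∀ i j, i ≠ j → Disjoint (C i) (C j)) ∧
  (∀ i, C i ⊆ A) ∧
  (∀ L ∈ A, ∃ i, L ∈ C i) ∧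
  (∀ i j, i ≠ j → ∀ L ∈ C i, ∀ K ∈ C j, ∀ p : ProjPlane, p ∈ L → p ∈ K →
    ∀ m : Fin k, ∃! N, N ∈ C m ∧ p ∈ N)

/-- Lattice isomorphism of two line arrangements: a bijection between the lines such that
a subfamily of lines has a common point iff the image subfamily has a common point. -/
def LatticeIso (A B : Finset (Set ProjPlane)) : Prop :=
  ∃ φ : Set ProjPlane → Set ProjPlane, Set.BijOn φ ↑A ↑B ∧
    ∀ S : Finset (Set ProjPlane), S ⊆ A →
      ((∃ p : ProjPlane, ∀ L ∈ S, p ∈ L) ↔ ∃ p : ProjPlane, ∀ L ∈ S, p ∈ φ L)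

/-- The projective line with homogeneous equation `a·x + b·y + c·z = 0`. -/
def lineOf (a b c : ℂ) : Set ProjPlane :=
  {p : ProjPlane | a * p.rep 0 + b * p.rep 1 + c * p.rep 2 = 0}

/-- A primitive cube root of unity. -/
noncomputable def ω : ℂ := Complex.exp (2 * Real.pi * Complex.I / 3)

/-- The Hesse arrangement of nine lines: the union of three of the four singular fibers of
the Hesse pencil `a(x³+y³+z³) + b·xyz`, namely the three triangles
`∏ (x + ω^a y + ω^b z)` with `a + b ≡ t (mod 3)`, `t = 0, 1, 2`. -/
noncomputable def Hesse9 : Finset (Set ProjPlane) :=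
  Finset.image (fun ab : Fin 3 × Fin 3 => lineOf 1 (ω ^ (ab.1 : ℕ)) (ω ^ (ab.2 : ℕ)))
    Finset.univ



section Aux

-- ω facts
lemma hω3 : ω ^ 3 = 1 := by
  rw [ω, ← Complex.exp_nat_mul]
  rw [show (3:ℕ) * (2 * Real.pi * Complex.I / 3) = 2 * Real.pi * Complex.I by push_cast; ring]
  exact Complex.exp_two_pi_mul_I

lemma hωim : ω.im ≠ 0 := by
  have h : (2 * (Real.pi:ℂ) * Complex.I / 3).re = 0 ∧ (2 * (Real.pi:ℂ) * Complex.I / 3).im = 2 * Real.pi / 3 := by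
    constructor <;> simp [Complex.div_re, Complex.div_im, Complex.mul_re, Complex.mul_im] <;> ring
  rw [ω, Complex.exp_im, h.1, h.2]
  have : Real.sin (2 * Real.pi / 3) > 0 := by
    apply Real.sin_pos_of_pos_of_lt_pi <;> nlinarith [Real.pi_pos]
  positivity

lemma hωsum : ω ^ 2 + ω + 1 = 0 := by
  have h1 : (ω - 1) * (ω ^ 2 + ω + 1) = 0 := by linear_combination hω3
  have h2 : ω ≠ 1 := by
    intro h
    have := hωim; rw [h] at this; simp at this
  rcases mul_eq_zero.mp h1 with h | h
  · exact absurd (by linear_combination h) h2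
  · exact h

lemma hωne : ω ≠ 0 := by
  intro h; have := hω3; rw [h] at this; norm_num at this

lemma lin_ne (a b : ℝ) (ha : a ≠ 0) : (a:ℂ) * ω + (b:ℂ) ≠ 0 := by
  intro h
  have := congrArg Complex.im h
  simp [Complex.add_im, Complex.mul_im] at this
  rcases this with h|h
  · exact ha h
  · exact hωim h

def e (t : ZMod 3) : ℂ := ω ^ t.val

lemma zmod3_cases : ∀ x : ZMod 3, x = 0 ∨ x = 1 ∨ x = 2 := by decide

lemma e0 : e 0 = 1 := by norm_num [e, ZMod.val]; exact pow_zero ω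
lemma e1 : e 1 = ω := by norm_num [e, ZMod.val]; exact pow_one ω
lemma e2 : e 2 = ω ^ 2 := by norm_num [e, ZMod.val]; rfl

lemma esum (i j k : ZMod 3) : e i + e j + e k = 0 ↔ (i ≠ j ∧ i ≠ k ∧ j ≠ k) := by
  have h2 : ω^2 = -1 - ω := by linear_combination hωsum
  rcases zmod3_cases i with rfl|rfl|rfl <;> rcases zmod3_cases j with rfl|rfl|rfl <;>
    rcases zmod3_cases k with rfl|rfl|rfl <;>
    norm_num [e0, e1, e2, h2] <;>
    first
      | decide
      | exact iff_of_true (by ring) (by decide)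
      | (intro h
         first
            | exact hωne (by linear_combination h)
            | exact lin_ne (1) (2) (by norm_num) (by push_cast; linear_combination h)
            | exact lin_ne (-1) (1) (by norm_num) (by push_cast; linear_combination h)
            | exact lin_ne (2) (1) (by norm_num) (by push_cast; linear_combination h)
            | exact lin_ne (-2) (-1) (by norm_num) (by push_cast; linear_combination h)
            | exact lin_ne (1) (-1) (by norm_num) (by push_cast; linear_combination h)
            | exact lin_ne (-1) (-2) (by norm_num) (by push_cast; linear_combination h)
            | exact lin_ne (3) (0) (by norm_num) (by push_cast; linear_combination h)
            | exact lin_ne (-3) (-3) (by norm_num) (by push_cast; linear_combination h)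
            | exact lin_ne (-1) (-3) (by norm_num) (by push_cast; linear_combination h)
            | exact lin_ne (-2) (-2) (by norm_num) (by push_cast; linear_combination h)
            | exact lin_ne (2) (2) (by norm_num) (by push_cast; linear_combination h)
            | exact lin_ne (1) (1) (by norm_num) (by push_cast; linear_combination h)
            | exact lin_ne (-1) (0) (by norm_num) (by push_cast; linear_combination h)
            | exact lin_ne (1) (0) (by norm_num) (by push_cast; linear_combination h)
            | exact lin_ne (2) (0) (by norm_num) (by push_cast; linear_combination h)
            | exact lin_ne (-2) (0) (by norm_num) (by push_cast; linear_combination h)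
            | exact lin_ne (3) (3) (by norm_num) (by push_cast; linear_combination h)
            | exact lin_ne (-3) (0) (by norm_num) (by push_cast; linear_combination h)
         )
      | skip

open Projectivization

lemma f_rep_mk (f : (Fin 3 → ℂ) →ₗ[ℂ] ℂ) (v : Fin 3 → ℂ) (hv : v ≠ 0) :
    f ((Projectivization.mk ℂ v hv).rep) = 0 ↔ f v = 0 := by
  obtain ⟨a, ha⟩ := exists_smul_eq_mk_rep ℂ v hv
  rw [← ha]
  simp [Units.smul_def, smul_eq_zero]

lemma mk_eq_of_smul (v w : Fin 3 → ℂ) (hv : v ≠ 0) (hw : w ≠ 0) (a : ℂ) (h : a • v = w) :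
    Projectivization.mk ℂ v hv = Projectivization.mk ℂ w hw := by
  rw [mk_eq_mk_iff']
  have ha : a ≠ 0 := by rintro rfl; simp at h; exact hw h.symm
  exact ⟨a⁻¹, by rw [← h, smul_smul, inv_mul_cancel₀ ha, one_smul]⟩

-- kernel dimension
lemma ker_finrank_le (f : (Fin 3 → ℂ) →ₗ[ℂ] ℂ) (hf : f ≠ 0) :
    Module.finrank ℂ (LinearMap.ker f) ≤ 2 := by
  by_contra h
  push_neg at h
  have h3 : Module.finrank ℂ (Fin 3 → ℂ) = 3 := by
    simp [Module.finrank_fintype_fun_eq_card]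
  have hle : Module.finrank ℂ (LinearMap.ker f) ≤ 3 := le_trans (Submodule.finrank_le _) (le_of_eq h3)
  have : Module.finrank ℂ (LinearMap.ker f) = 3 := le_antisymm hle h
  have : LinearMap.ker f = ⊤ := Submodule.eq_top_of_finrank_eq (by rw [this, h3])
  exact hf (LinearMap.ker_eq_top.mp this)

-- two lines meet
lemma lines_meet {L K : Set ProjPlane} (hL : IsProjLine L) (hK : IsProjLine K) :
    ∃ p, p ∈ L ∧ p ∈ K := by
  obtain ⟨f, hf, rfl⟩ := hL
  obtain ⟨g, hg, rfl⟩ := hK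
  have hni : ¬ Function.Injective (f.prod g) := by
    intro hinj
    have := LinearMap.finrank_le_finrank_of_injective hinj
    simp [Module.finrank_fintype_fun_eq_card] at this
  rw [← LinearMap.ker_eq_bot] at hni
  obtain ⟨v, hvmem, hvne⟩ := Submodule.exists_mem_ne_zero_of_ne_bot hni
  refine ⟨Projectivization.mk ℂ v hvne, ?_, ?_⟩ <;>
    · simp only [Set.mem_setOf_eq, f_rep_mk]
      have := LinearMap.mem_ker.mp hvmem
      simp [LinearMap.prod_apply, Prod.ext_iff] at this
      tauto

-- unique intersection of distinct lines
lemma unique_pt {L K : Set ProjPlane} (hL : IsProjLine L) (hK : IsProjLine K) (hLK : L ≠ K)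
    {p q : ProjPlane} (hpL : p ∈ L) (hpK : p ∈ K) (hqL : q ∈ L) (hqK : q ∈ K) : p = q := by
  obtain ⟨f, hf, rfl⟩ := hL
  obtain ⟨g, hg, rfl⟩ := hK
  by_contra hpq
  have hdep : LinearIndependent ℂ ![p.rep, q.rep] := by
    rw [LinearIndependent.pair_iff' (rep_nonzero p)]
    intro a ha
    exact hpq (by
      rw [← mk_rep p, ← mk_rep q]
      exact mk_eq_of_smul _ _ _ _ a ha)
  have hspan : ∀ (h : (Fin 3 → ℂ) →ₗ[ℂ] ℂ), h ≠ 0 → h p.rep = 0 → h q.rep = 0 →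
      LinearMap.ker h = Submodule.span ℂ (Set.range ![p.rep, q.rep]) := by
    intro h hh hp hq
    have hle : Submodule.span ℂ (Set.range ![p.rep, q.rep]) ≤ LinearMap.ker h := by
      rw [Submodule.span_le]
      rintro x ⟨i, rfl⟩
      fin_cases i <;> simpa [LinearMap.mem_ker]
    have hfr : Module.finrank ℂ (Submodule.span ℂ (Set.range ![p.rep, q.rep])) = 2 := by
      rw [finrank_span_eq_card hdep]; simp
    exact (Submodule.eq_of_le_of_finrank_le hle (by rw [hfr]; exact ker_finrank_le h hh)).symm
  have hker : LinearMap.ker f = LinearMap.ker g :=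
    (hspan f hf hpL hqL).trans (hspan g hg hpK hqK).symm
  apply hLK
  ext x
  simp only [Set.mem_setOf_eq, ← LinearMap.mem_ker, hker]

lemma shift3 : ∀ g h : ZMod 3 → ZMod 3, (∀ x y, g x = g y → x = y) → (∀ x y, h x = h y → x = y) →
    (∀ b, g b ≠ h b) → ∃ s, ∀ b, h b = g b + s := by decide


lemma latin3 (f : ZMod 3 → ZMod 3 → ZMod 3)
    (hrow : ∀ a, Function.Injective (f a))
    (hcol : ∀ b, Function.Injective (fun a => f a b)) :
    ∃ σ τ : ZMod 3 → ZMod 3, Function.Bijective σ ∧ Function.Bijective τ ∧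
      ∀ a b, f (σ a) (τ b) = a + b := by
  set s : ZMod 3 → ZMod 3 := fun a => f a 0 - f 0 0 with hs
  have key : ∀ a b, f a b = f 0 b + s a := by
    intro a b
    by_cases ha : a = 0
    · subst ha; simp [hs]
    · obtain ⟨s', hs'⟩ := shift3 (f 0) (f a) (fun x y h => hrow 0 h) (fun x y h => hrow a h)
        (fun b hb => ha (hcol b hb.symm ▸ rfl))
      have h0 := hs' 0
      have hseq : s' = s a := by simp only [hs]; linear_combination -h0
      rw [hs' b, hseq]
  have hsinj : Function.Injective s := by
    intro a a' h
    apply hcol 0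
    simp only [hs] at h ⊢
    linear_combination h
  have hsbij : Function.Bijective s := Finite.injective_iff_bijective.mp hsinj
  have htbij : Function.Bijective (f 0) := Finite.injective_iff_bijective.mp (hrow 0)
  let S := Equiv.ofBijective s hsbij
  let T := Equiv.ofBijective (f 0) htbij
  refine ⟨S.symm, T.symm, S.symm.bijective, T.symm.bijective, fun a b => ?_⟩
  rw [key]
  have h1 : s (S.symm a) = a := S.apply_symm_apply a
  have h2 : f 0 (T.symm b) = b := T.apply_symm_apply b
  rw [h1, h2, add_comm]

lemma pow_mod3 (m : ℕ) : ω ^ m = ω ^ (m % 3) := by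
  conv_lhs => rw [← Nat.mod_add_div m 3]
  rw [pow_add, pow_mul, hω3, one_pow, mul_one]

lemma e_add (x y : ZMod 3) : e (x + y) = e x * e y := by
  rw [e, e, e, ZMod.val_add, ← pow_mod3, pow_add]

lemma e_eq {x y : ZMod 3} (h : x = y) : e x = e y := congrArg e h

lemma e_ne : e 0 ≠ 0 := by rw [e0]; norm_num

lemma e_inj : ∀ {x y : ZMod 3}, e x = e y → x = y := by
  have h2 : ω^2 = -1 - ω := by linear_combination hωsum
  intro x y h
  rcases zmod3_cases x with rfl|rfl|rfl <;> rcases zmod3_cases y with rfl|rfl|rfl <;>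
    simp only [e0, e1, e2] at h
  all_goals first
    | rfl
    | (exfalso
       first
        | exact lin_ne 1 (-1) (by norm_num) (by push_cast; linear_combination h)
        | exact lin_ne 1 (-1) (by norm_num) (by push_cast; linear_combination -h)
        | exact lin_ne 1 2 (by norm_num) (by push_cast; linear_combination h + hωsum)
        | exact lin_ne 1 2 (by norm_num) (by push_cast; linear_combination -h + hωsum)
        | exact lin_ne 2 1 (by norm_num) (by push_cast; linear_combination h + hωsum)
        | exact lin_ne 2 1 (by norm_num) (by push_cast; linear_combination -h + hωsum)
        | exact lin_ne 1 2 (by norm_num) (by push_cast; linear_combination h - hωsum)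
        | exact lin_ne 2 1 (by norm_num) (by push_cast; linear_combination h - hωsum)
        | exact lin_ne 2 1 (by norm_num) (by push_cast; linear_combination -h - hωsum)
        | exact lin_ne 1 2 (by norm_num) (by push_cast; linear_combination -h - hωsum))

-- membership in lineOf for explicitly given points
lemma mem_lineOf_mk (a b c : ℂ) (w : Fin 3 → ℂ) (hw : w ≠ 0) :
    Projectivization.mk ℂ w hw ∈ lineOf a b c ↔ a * w 0 + b * w 1 + c * w 2 = 0 := by
  obtain ⟨t, ht⟩ := exists_smul_eq_mk_rep ℂ w hw
  have hrep : ∀ i, (Projectivization.mk ℂ w hw).rep i = (t : ℂ) * w i := by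
    intro i; rw [← ht]; simp [Units.smul_def]
  rw [lineOf, Set.mem_setOf_eq, hrep, hrep, hrep]
  have key : a * ((t:ℂ) * w 0) + b * ((t:ℂ) * w 1) + c * ((t:ℂ) * w 2) =
      (t : ℂ) * (a * w 0 + b * w 1 + c * w 2) := by ring
  rw [key, mul_eq_zero]
  constructor
  · rintro (h | h)
    · exact absurd h t.ne_zero
    · exact h
  · exact Or.inr

def HL (u v : ZMod 3) : Set ProjPlane := lineOf 1 (e u) (e v)

lemma mem_HL_mk (u v : ZMod 3) (w : Fin 3 → ℂ) (hw : w ≠ 0) :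
    Projectivization.mk ℂ w hw ∈ HL u v ↔ w 0 + e u * w 1 + e v * w 2 = 0 := by
  rw [HL, mem_lineOf_mk, one_mul]

lemma isProjLine_HL (u v : ZMod 3) : IsProjLine (HL u v) := by
  refine ⟨LinearMap.proj 0 + e u • LinearMap.proj 1 + e v • LinearMap.proj 2, ?_, ?_⟩
  · intro h
    have := congrFun (congrArg DFunLike.coe h) (Pi.single 0 1)
    simp [Pi.single_apply] at this
  · ext p
    simp [HL, lineOf, LinearMap.proj, smul_eq_mul]

-- the standard point on HL with last coordinate 0
lemma pt1_ne (u : ZMod 3) : (![-(e u), 1, 0] : Fin 3 → ℂ) ≠ 0 := by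
  intro h
  have := congrFun h 1
  simp at this

lemma pt2_ne (u : ZMod 3) : (![-(e u), 0, 1] : Fin 3 → ℂ) ≠ 0 := by
  intro h
  have := congrFun h 2
  simp at this

lemma HL_inj {u v u' v' : ZMod 3} (h : HL u v = HL u' v') : u = u' ∧ v = v' := by
  constructor
  · have h1 : Projectivization.mk ℂ ![-(e u), 1, 0] (pt1_ne u) ∈ HL u v := by
      rw [mem_HL_mk]; simp
    rw [h, mem_HL_mk] at h1
    simp at h1
    exact e_inj (by linear_combination -h1)
  · have h2 : Projectivization.mk ℂ ![-(e v), 0, 1] (pt2_ne v) ∈ HL u v := by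
      rw [mem_HL_mk]; simp
    rw [h, mem_HL_mk] at h2
    simp at h2
    exact e_inj (by linear_combination -h2)

lemma hesse9_eq : Hesse9 = Finset.image (fun uv : ZMod 3 × ZMod 3 => HL uv.1 uv.2)
    Finset.univ := by
  have key : ∀ x : Fin 3, ω ^ (x : ℕ) = e ((x : ℕ) : ZMod 3) := by
    intro x
    rw [e, ZMod.val_natCast, ← pow_mod3]
  ext L
  simp only [Hesse9, Finset.mem_image, Finset.mem_univ, true_and]
  constructor
  · rintro ⟨ab, rfl⟩
    exact ⟨(((ab.1 : ℕ) : ZMod 3), ((ab.2 : ℕ) : ZMod 3)), by rw [HL, ← key, ← key]⟩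
  · rintro ⟨uv, rfl⟩
    refine ⟨(⟨uv.1.val, uv.1.val_lt⟩, ⟨uv.2.val, uv.2.val_lt⟩), ?_⟩
    rfl

structure NetData (A : Finset (Set ProjPlane)) where
  g : Fin 3 → ZMod 3 → Set ProjPlane
  proj : ∀ i a, IsProjLine (g i a)
  memA : ∀ i a, g i a ∈ A
  inj : ∀ i a j b, g i a = g j b → i = j ∧ a = b
  surj : ∀ L ∈ A, ∃ i a, L = g i a
  triple : ∀ a b, ∃ p, p ∈ g 0 a ∧ p ∈ g 1 b ∧ p ∈ g 2 (a + b)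
  conc : ∀ p a b c, p ∈ g 0 a → p ∈ g 1 b → p ∈ g 2 c → c = a + b
  same : ∀ p (i : Fin 3) a a', a ≠ a' → p ∈ g i a → p ∈ g i a' →
         ∀ j b, p ∈ g j b → (j = i ∧ b = a) ∨ (j = i ∧ b = a')

namespace NetData

variable {A : Finset (Set ProjPlane)} (d : NetData A)

def idx (L : Set ProjPlane) : Fin 3 × ZMod 3 :=
  if h : L ∈ A then ⟨(d.surj L h).choose, (d.surj L h).choose_spec.choose⟩ else ⟨0, 0⟩

lemma idx_spec {L : Set ProjPlane} (h : L ∈ A) : L = d.g (d.idx L).1 (d.idx L).2 := by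
  rw [idx, dif_pos h]
  exact (d.surj L h).choose_spec.choose_spec

lemma idx_g (i : Fin 3) (a : ZMod 3) : d.idx (d.g i a) = (i, a) := by
  have h := d.idx_spec (d.memA i a)
  obtain ⟨h1, h2⟩ := d.inj _ _ _ _ h.symm
  exact Prod.ext h1 h2

lemma idx_injOn {L K : Set ProjPlane} (hL : L ∈ A) (hK : K ∈ A) (h : d.idx L = d.idx K) :
    L = K := by rw [d.idx_spec hL, d.idx_spec hK, h]

lemma mem_iff_idx {L : Set ProjPlane} (hL : L ∈ A) {p : ProjPlane} :
    p ∈ L ↔ p ∈ d.g (d.idx L).1 (d.idx L).2 := by rw [← d.idx_spec hL]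

/-- classes of three distinct concurrent lines are pairwise distinct -/
lemma classes_distinct {p : ProjPlane} {i1 i2 i3 : Fin 3} {a1 a2 a3 : ZMod 3}
    (h12 : (i1, a1) ≠ (i2, a2)) (h13 : (i1, a1) ≠ (i3, a3)) (h23 : (i2, a2) ≠ (i3, a3))
    (hp1 : p ∈ d.g i1 a1) (hp2 : p ∈ d.g i2 a2) (hp3 : p ∈ d.g i3 a3) : i1 ≠ i2 := by
  intro hi
  subst hi
  have ha : a1 ≠ a2 := fun h => h12 (by rw [h])
  rcases d.same p i1 a1 a2 ha hp1 hp2 i3 a3 hp3 with ⟨h1, h2⟩ | ⟨h1, h2⟩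
  · exact h13 (by rw [h1, h2])
  · exact h23 (by rw [h1, h2])

lemma fin3_pigeon : ∀ i1 i2 i3 i4 : Fin 3, i1 ≠ i2 → i3 ≠ i1 → i3 ≠ i2 → i4 ≠ i1 → i4 ≠ i2 →
    i3 = i4 := by decide

lemma classify3 {p : ProjPlane} {i1 i2 i3 : Fin 3} {a1 a2 a3 : ZMod 3}
    (h12 : (i1, a1) ≠ (i2, a2)) (h13 : (i1, a1) ≠ (i3, a3)) (h23 : (i2, a2) ≠ (i3, a3))
    (hp1 : p ∈ d.g i1 a1) (hp2 : p ∈ d.g i2 a2) (hp3 : p ∈ d.g i3 a3) :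
    ∃ a b, ({(i1, a1), (i2, a2), (i3, a3)} : Finset (Fin 3 × ZMod 3)) =
      {((0 : Fin 3), a), ((1 : Fin 3), b), ((2 : Fin 3), a + b)} := by
  have d12 : i1 ≠ i2 := d.classes_distinct h12 h13 h23 hp1 hp2 hp3
  have d13 : i1 ≠ i3 := by
    have := d.classes_distinct (p := p) (by simpa [ne_comm] using h13) (by simpa [ne_comm] using h12) (by simp [Prod.ext_iff] at h23 ⊢; tauto) hp1 hp3 hp2
    exact this
  have d23 : i2 ≠ i3 := by
    exact d.classes_distinct (p := p) h23 (by simp [Prod.ext_iff, eq_comm] at h12 ⊢; tauto) (by simp [Prod.ext_iff, eq_comm] at h13 ⊢; tauto) hp2 hp3 hp1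
  fin_cases i1 <;> fin_cases i2 <;> fin_cases i3 <;> simp_all
  · exact ⟨a1, a2, by rw [d.conc p a1 a2 a3 hp1 hp2 hp3]⟩
  · refine ⟨a1, a3, ?_⟩
    rw [d.conc p a1 a3 a2 hp1 hp3 hp2]
    ext x; simp; tauto
  · refine ⟨a2, a1, ?_⟩
    rw [d.conc p a2 a1 a3 hp2 hp1 hp3]
    ext x; simp; tauto
  · refine ⟨a3, a1, ?_⟩
    rw [d.conc p a3 a1 a2 hp3 hp1 hp2]
    ext x; simp; tauto
  · refine ⟨a2, a3, ?_⟩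
    rw [d.conc p a2 a3 a1 hp2 hp3 hp1]
    ext x; simp; tauto
  · refine ⟨a3, a2, ?_⟩
    rw [d.conc p a3 a2 a1 hp3 hp2 hp1]
    ext x; simp; tauto

end NetData

namespace NetData
variable {A : Finset (Set ProjPlane)} (d : NetData A)

lemma plane_nonempty : Nonempty ProjPlane := by
  refine ⟨Projectivization.mk ℂ ![1, 0, 0] ?_⟩
  intro h
  have := congrFun h 0
  simp at this

include d in
/-- no point lies on four distinct lines of the arrangement -/
lemma card_le_three {p : ProjPlane} {S : Finset (Set ProjPlane)} (hS : S ⊆ A)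
    (hp : ∀ L ∈ S, p ∈ L) : S.card ≤ 3 := by
  by_contra h
  push_neg at h
  have hcard : 2 < S.card := by omega
  obtain ⟨L1, L2, L3, h1, h2, h3, n12, n13, n23⟩ := Finset.two_lt_card_iff.mp hcard
  have m2 : L2 ∈ S.erase L1 := Finset.mem_erase.mpr ⟨Ne.symm n12, h2⟩
  have m3 : L3 ∈ (S.erase L1).erase L2 :=
    Finset.mem_erase.mpr ⟨Ne.symm n23, Finset.mem_erase.mpr ⟨Ne.symm n13, h3⟩⟩
  have h4 : (((S.erase L1).erase L2).erase L3).Nonempty := by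
    rw [← Finset.card_pos, Finset.card_erase_of_mem m3, Finset.card_erase_of_mem m2,
      Finset.card_erase_of_mem h1]
    omega
  obtain ⟨L4, hL4⟩ := h4
  rw [Finset.mem_erase, Finset.mem_erase, Finset.mem_erase] at hL4
  obtain ⟨n43, n42, n41, h4S⟩ := hL4
  -- index everything
  have mem1 := hS h1; have mem2 := hS h2; have mem3 := hS h3; have mem4 := hS h4S
  have p1 : p ∈ d.g (d.idx L1).1 (d.idx L1).2 := (d.mem_iff_idx mem1).mp (hp L1 h1)
  have p2 : p ∈ d.g (d.idx L2).1 (d.idx L2).2 := (d.mem_iff_idx mem2).mp (hp L2 h2)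
  have p3 : p ∈ d.g (d.idx L3).1 (d.idx L3).2 := (d.mem_iff_idx mem3).mp (hp L3 h3)
  have p4 : p ∈ d.g (d.idx L4).1 (d.idx L4).2 := (d.mem_iff_idx mem4).mp (hp L4 h4S)
  have ne_idx : ∀ {L K : Set ProjPlane}, L ∈ A → K ∈ A → L ≠ K → d.idx L ≠ d.idx K :=
    fun hL hK hne h => hne (d.idx_injOn hL hK h)
  have i12 := ne_idx mem1 mem2 n12
  have i13 := ne_idx mem1 mem3 n13
  have i23 := ne_idx mem2 mem3 n23
  have i14 := ne_idx mem1 mem4 (Ne.symm n41)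
  have i24 := ne_idx mem2 mem4 (Ne.symm n42)
  have i34 := ne_idx mem3 mem4 (Ne.symm n43)
  have c12 : (d.idx L1).1 ≠ (d.idx L2).1 :=
    d.classes_distinct (by simpa using i12) (by simpa using i13) (by simpa using i23) p1 p2 p3
  have c31 : (d.idx L3).1 ≠ (d.idx L1).1 :=
    d.classes_distinct (by simpa using i13.symm) (by simpa using i23.symm) (by simpa using i12) p3 p1 p2
  have c32 : (d.idx L3).1 ≠ (d.idx L2).1 :=
    d.classes_distinct (by simpa using i23.symm) (by simpa using i13.symm) (by simpa using i12.symm) p3 p2 p1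
  have c41 : (d.idx L4).1 ≠ (d.idx L1).1 :=
    d.classes_distinct (by simpa using i14.symm) (by simpa using i24.symm) (by simpa using i12) p4 p1 p2
  have c42 : (d.idx L4).1 ≠ (d.idx L2).1 :=
    d.classes_distinct (by simpa using i24.symm) (by simpa using i14.symm) (by simpa using i12.symm) p4 p2 p1
  have c34 : (d.idx L3).1 = (d.idx L4).1 :=
    fin3_pigeon (d.idx L1).1 (d.idx L2).1 (d.idx L3).1 (d.idx L4).1 c12 c31 c32 c41 c42
  -- L3 L4 same class, L1 third line
  have ha34 : (d.idx L3).2 ≠ (d.idx L4).2 := by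
    intro h
    exact i34 (Prod.ext c34 h)
  have := d.same p (d.idx L3).1 (d.idx L3).2 (d.idx L4).2 ha34 p3 (c34 ▸ p4)
    (d.idx L1).1 (d.idx L1).2 p1
  rcases this with ⟨h1', _⟩ | ⟨h1', _⟩ <;> exact c31 h1'.symm

include d in
lemma projA {L : Set ProjPlane} (h : L ∈ A) : IsProjLine L := by
  rw [d.idx_spec h]; exact d.proj _ _

include d in
lemma conc_iff {S : Finset (Set ProjPlane)} (hS : S ⊆ A) :
    (∃ p, ∀ L ∈ S, p ∈ L) ↔
    (S.card ≤ 2 ∨ ∃ a b, S.image d.idx =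
      {((0 : Fin 3), a), ((1 : Fin 3), b), ((2 : Fin 3), a + b)}) := by
  constructor
  · rintro ⟨p, hp⟩
    by_cases hc : S.card ≤ 2
    · exact Or.inl hc
    · right
      have h3 : S.card = 3 := le_antisymm (d.card_le_three hS hp) (by omega)
      obtain ⟨x, y, z, nxy, nxz, nyz, rfl⟩ := Finset.card_eq_three.mp h3
      have hx : x ∈ A := hS (by simp)
      have hy : y ∈ A := hS (by simp)
      have hz : z ∈ A := hS (by simp)
      have px : p ∈ d.g (d.idx x).1 (d.idx x).2 := (d.mem_iff_idx hx).mp (hp x (by simp))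
      have py : p ∈ d.g (d.idx y).1 (d.idx y).2 := (d.mem_iff_idx hy).mp (hp y (by simp))
      have pz : p ∈ d.g (d.idx z).1 (d.idx z).2 := (d.mem_iff_idx hz).mp (hp z (by simp))
      have ixy : d.idx x ≠ d.idx y := fun h => nxy (d.idx_injOn hx hy h)
      have ixz : d.idx x ≠ d.idx z := fun h => nxz (d.idx_injOn hx hz h)
      have iyz : d.idx y ≠ d.idx z := fun h => nyz (d.idx_injOn hy hz h)
      obtain ⟨a, b, hab⟩ := d.classify3 (by simpa using ixy) (by simpa using ixz)
        (by simpa using iyz) px py pz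
      refine ⟨a, b, ?_⟩
      rw [Finset.image_insert, Finset.image_insert, Finset.image_singleton]
      simpa using hab
  · rintro (hc | ⟨a, b, hab⟩)
    · interval_cases h : S.card
      · obtain rfl := Finset.card_eq_zero.mp h
        obtain ⟨p⟩ : Nonempty ProjPlane := plane_nonempty
        exact ⟨p, by simp⟩
      · obtain ⟨L, rfl⟩ := Finset.card_eq_one.mp h
        have hL : L ∈ A := hS (Finset.mem_singleton_self L)
        obtain ⟨p, hp, -⟩ := lines_meet (d.projA hL) (d.projA hL)
        exact ⟨p, by simpa using hp⟩
      · obtain ⟨L, K, hLK, rfl⟩ := Finset.card_eq_two.mp h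
        have hL : L ∈ A := hS (by simp)
        have hK : K ∈ A := hS (by simp)
        obtain ⟨p, hp1, hp2⟩ := lines_meet (d.projA hL) (d.projA hK)
        refine ⟨p, ?_⟩
        intro M hM
        rcases Finset.mem_insert.mp hM with rfl | hM
        · exact hp1
        · rw [Finset.mem_singleton.mp hM]; exact hp2
    · obtain ⟨p, hp0, hp1, hp2⟩ := d.triple a b
      refine ⟨p, fun L hL => ?_⟩
      have hidx : d.idx L ∈ S.image d.idx := Finset.mem_image_of_mem _ hL
      rw [hab] at hidx
      have hLA : L ∈ A := hS hL
      rw [d.mem_iff_idx hLA]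
      rcases Finset.mem_insert.mp hidx with h | h
      · rw [h]; exact hp0
      · rcases Finset.mem_insert.mp h with h | h
        · rw [h]; exact hp1
        · rw [Finset.mem_singleton.mp h, ]; exact hp2

end NetData

lemma latticeIso_of_netData {A B : Finset (Set ProjPlane)} (dA : NetData A) (dB : NetData B) :
    LatticeIso A B := by
  classical
  set φ : Set ProjPlane → Set ProjPlane :=
    fun L => if L ∈ A then dB.g (dA.idx L).1 (dA.idx L).2 else L with hφ
  have hφA : ∀ L ∈ A, φ L = dB.g (dA.idx L).1 (dA.idx L).2 := fun L h => by
    simp [hφ, h]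
  have hφB : ∀ L ∈ A, φ L ∈ B := fun L h => by rw [hφA L h]; exact dB.memA _ _
  have hidxφ : ∀ L ∈ A, dB.idx (φ L) = dA.idx L := fun L h => by
    rw [hφA L h, dB.idx_g]
  have hinj : Set.InjOn φ ↑A := by
    intro L hL K hK h
    rw [hφA L hL, hφA K hK] at h
    obtain ⟨h1, h2⟩ := dB.inj _ _ _ _ h
    exact dA.idx_injOn hL hK (Prod.ext h1 h2)
  refine ⟨φ, ⟨fun L hL => hφB L hL, hinj, ?_⟩, ?_⟩
  · intro K hK
    obtain ⟨i, a, rfl⟩ := dB.surj K hK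
    refine ⟨dA.g i a, dA.memA i a, ?_⟩
    rw [hφA _ (dA.memA i a), dA.idx_g]
  · intro S hSsub
    have hS' : S.image φ ⊆ B := by
      intro K hK
      obtain ⟨L, hL, rfl⟩ := Finset.mem_image.mp hK
      exact hφB L (hSsub hL)
    have hcard : (S.image φ).card = S.card := by
      apply Finset.card_image_of_injOn
      intro L hL K hK h
      exact hinj (hSsub hL) (hSsub hK) h
    have himg : (S.image φ).image dB.idx = S.image dA.idx := by
      rw [Finset.image_image]
      apply Finset.image_congr
      intro L hL
      exact hidxφ L (hSsub hL)
    have e2 : (∃ p, ∀ L ∈ S, p ∈ φ L) ↔ (∃ p, ∀ K ∈ S.image φ, p ∈ K) := by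
      constructor
      · rintro ⟨p, hp⟩
        exact ⟨p, fun K hK => by
          obtain ⟨L, hL, rfl⟩ := Finset.mem_image.mp hK
          exact hp L hL⟩
      · rintro ⟨p, hp⟩
        exact ⟨p, fun L hL => hp _ (Finset.mem_image_of_mem _ hL)⟩
    rw [e2, dA.conc_iff hSsub, dB.conc_iff hS', hcard, himg]

lemma fin3_third : ∀ i j : Fin 3, i ≠ j → ∃ m, m ≠ i ∧ m ≠ j := by decide

theorem netData_of_net (A : Finset (Set ProjPlane)) (C : Fin 3 → Finset (Set ProjPlane))
    (hA : IsNet 3 3 A C) (hAd : {p : ProjPlane | mult A p = 2}.ncard = 9) :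
    Nonempty (NetData A) := by
  obtain ⟨hproj, hcardA, hcardC, hdisj, hsub, hcover, hax⟩ := hA
  -- basic facts
  have hprojC : ∀ {i L}, L ∈ C i → IsProjLine L := fun {i L} h => hproj L (hsub i h)
  have hclass_ne : ∀ {i j L K}, i ≠ j → L ∈ C i → K ∈ C j → L ≠ K := by
    intro i j L K hij hL hK h
    exact (Finset.disjoint_left.mp (hdisj i j hij)) hL (h ▸ hK)
  -- B1 : no point has two lines of one class and a line of another class
  have B1 : ∀ {p : ProjPlane} {i j} {L L' K}, L ∈ C i → L' ∈ C i → L ≠ L' → K ∈ C j → j ≠ i →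
      p ∈ L → p ∈ L' → p ∈ K → False := by
    intro p i j L L' K hL hL' hne hK hji hpL hpL' hpK
    obtain ⟨N, -, hNuniq⟩ := hax i j (Ne.symm hji) L hL K hK p hpL hpK i
    exact hne ((hNuniq L ⟨hL, hpL⟩).trans (hNuniq L' ⟨hL', hpL'⟩).symm)
  -- structure of double points
  have double_struct : ∀ {q : ProjPlane}, mult A q = 2 →
      ∃ j L K, L ≠ K ∧ L ∈ C j ∧ K ∈ C j ∧ linesThrough A q = {L, K} := by
    intro q hq
    obtain ⟨L, K, hLK, hq2⟩ := Finset.card_eq_two.mp hq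
    have hL : L ∈ linesThrough A q := by rw [hq2]; simp
    have hK : K ∈ linesThrough A q := by rw [hq2]; simp
    rw [linesThrough, Finset.mem_filter] at hL hK
    obtain ⟨jL, hjL⟩ := hcover L hL.1
    obtain ⟨jK, hjK⟩ := hcover K hK.1
    by_cases hj : jL = jK
    · exact ⟨jK, L, K, hLK, hj ▸ hjL, hjK, hq2⟩
    · exfalso
      obtain ⟨m, hm1, hm2⟩ := fin3_third jL jK hj
      obtain ⟨N, ⟨hNC, hNq⟩, -⟩ := hax jL jK hj L hjL K hjK q hL.2 hK.2 m
      have hNA : N ∈ linesThrough A q := by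
        rw [linesThrough, Finset.mem_filter]
        exact ⟨hsub m hNC, hNq⟩
      rw [hq2] at hNA
      rcases Finset.mem_insert.mp hNA with rfl | hNA
      · exact hclass_ne hm1 hNC hjL rfl
      · exact hclass_ne hm2 hNC hjK (Finset.mem_singleton.mp hNA)
  -- B2 : no class is fully concurrent, strong version (hsame_raw)
  have hsame_raw : ∀ {p : ProjPlane} {i} {L L' K}, L ∈ C i → L' ∈ C i → L ≠ L' → K ∈ A →
      K ≠ L → K ≠ L' → p ∈ L → p ∈ L' → p ∈ K → False := by
    intro p i L L' K hL hL' hne hKA hKL hKL' hpL hpL' hpK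
    obtain ⟨j, hKj⟩ := hcover K hKA
    by_cases hj : j = i
    · -- all three lines of class i pass through p
      subst hj
      have hCi : C j = {L, L', K} := by
        apply (Finset.eq_of_subset_of_card_le ?_ ?_).symm
        · intro x hx
          rcases Finset.mem_insert.mp hx with rfl | hx
          · exact hL
          · rcases Finset.mem_insert.mp hx with rfl | hx
            · exact hL'
            · rw [Finset.mem_singleton.mp hx]; exact hKj
        · have hc3 : ({L, L', K} : Finset (Set ProjPlane)).card = 3 := by
            rw [Finset.card_insert_of_notMem (by simp [hne, Ne.symm hKL]),
              Finset.card_insert_of_notMem (by simp [Ne.symm hKL']), Finset.card_singleton]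
          rw [hcardC, hc3]
      have hallCi : ∀ M ∈ C j, p ∈ M := by
        intro M hM
        rw [hCi] at hM
        rcases Finset.mem_insert.mp hM with rfl | hM
        · exact hpL
        · rcases Finset.mem_insert.mp hM with rfl | hM
          · exact hpL'
          · rw [Finset.mem_singleton.mp hM]; exact hpK
      -- counting argument
      set D := {q : ProjPlane | mult A q = 2} with hD
      have hDfin : D.Finite := Set.finite_of_ncard_ne_zero (by rw [hAd]; norm_num)
      set U : Finset (Finset (Set ProjPlane)) :=
        (Finset.univ.filter (· ≠ j)).biUnion (fun m => (C m).powersetCard 2) with hU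
      have hmaps : ∀ q ∈ D, linesThrough A q ∈ U := by
        intro q hq
        obtain ⟨m, Lq, Kq, hnq, hLq, hKq, heq⟩ := double_struct hq
        have hmj : m ≠ j := by
          rintro rfl
          -- Lq Kq in class j, all of class j passes through p
          have hqL : q ∈ Lq :=
            (Finset.mem_filter.mp (show Lq ∈ linesThrough A q by rw [heq]; simp)).2
          have hqK : q ∈ Kq :=
            (Finset.mem_filter.mp (show Kq ∈ linesThrough A q by rw [heq]; simp)).2
          have hq1 : q = p := unique_pt (hprojC hLq) (hprojC hKq) hnq
            hqL hqK (hallCi Lq hLq) (hallCi Kq hKq)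
          -- then linesThrough A q ⊇ C j, card 3 > 2
          have hsub3 : C m ⊆ linesThrough A q := by
            intro M hM
            rw [linesThrough, Finset.mem_filter]
            exact ⟨hsub m hM, hq1 ▸ hallCi M hM⟩
          have := Finset.card_le_card hsub3
          rw [hcardC] at this
          have : mult A q = 2 := hq
          rw [mult] at this
          omega
        rw [hU]
        rw [Finset.mem_biUnion]
        refine ⟨m, by simp [hmj], ?_⟩
        rw [Finset.mem_powersetCard]
        constructor
        · rw [heq]
          intro x hx
          rcases Finset.mem_insert.mp hx with rfl | hx
          · exact hLq
          · rw [Finset.mem_singleton.mp hx]; exact hKq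
        · rw [heq]; rw [Finset.card_insert_of_notMem (by simpa using hnq), Finset.card_singleton]
      have hinj : Set.InjOn (linesThrough A) D := by
        intro q hq q' hq' heq
        obtain ⟨m, Lq, Kq, hnq, hLq, hKq, heq2⟩ := double_struct hq
        have heq2' : linesThrough A q' = {Lq, Kq} := heq ▸ heq2
        have h1L : q ∈ Lq := (Finset.mem_filter.mp (show Lq ∈ linesThrough A q by rw [heq2]; simp)).2
        have h1K : q ∈ Kq := (Finset.mem_filter.mp (show Kq ∈ linesThrough A q by rw [heq2]; simp)).2
        have h2L : q' ∈ Lq := (Finset.mem_filter.mp (show Lq ∈ linesThrough A q' by rw [heq2']; simp)).2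
        have h2K : q' ∈ Kq := (Finset.mem_filter.mp (show Kq ∈ linesThrough A q' by rw [heq2']; simp)).2
        exact unique_pt (hprojC hLq) (hprojC hKq) hnq h1L h1K h2L h2K
      have hcardU : U.card ≤ 6 := by
        apply le_trans (Finset.card_biUnion_le)
        have : ∀ m, ((C m).powersetCard 2).card = 3 := by
          intro m
          rw [Finset.card_powersetCard, hcardC]
          decide
        calc ∑ m ∈ Finset.univ.filter (· ≠ j), ((C m).powersetCard 2).card
            = ∑ m ∈ Finset.univ.filter (· ≠ j), 3 := by
              apply Finset.sum_congr rfl; intro m _; exact this m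
          _ ≤ 6 := by
              rw [Finset.sum_const, smul_eq_mul]
              have : (Finset.univ.filter (· ≠ j)).card ≤ 2 := by fin_cases j <;> decide
              omega
      have : D.ncard ≤ U.card := by
        have h1 : (linesThrough A '' D).ncard = D.ncard := Set.ncard_image_of_injOn hinj
        have h2 : linesThrough A '' D ⊆ ↑U := by
          rintro _ ⟨q, hq, rfl⟩
          exact hmaps q hq
        calc D.ncard = (linesThrough A '' D).ncard := h1.symm
          _ ≤ (↑U : Set (Finset (Set ProjPlane))).ncard := Set.ncard_le_ncard h2 (U.finite_toSet)
          _ = U.card := Set.ncard_coe_finset U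
      rw [hAd] at this
      omega
    · -- K in a different class
      exact B1 hL hL' hne hKj hj hpL hpL' hpK
  -- enumerate the classes
  have hcard3 : ∀ i, Fintype.card (ZMod 3) = (C i).card := by
    intro i; rw [hcardC]; simp
  let EC : ∀ i : Fin 3, {x // x ∈ C i} ≃ Fin 3 := fun i => Finset.equivFinOfCardEq (hcardC i)
  let EZ : ZMod 3 ≃ Fin 3 := Fintype.equivOfCardEq (by simp)
  set gRaw : Fin 3 → ZMod 3 → Set ProjPlane := fun i a => ((EC i).symm (EZ a) : {x // x ∈ C i})
    with hgRaw
  have hgC : ∀ i a, gRaw i a ∈ C i := fun i a => ((EC i).symm (EZ a)).2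
  have hgInj : ∀ i a a', gRaw i a = gRaw i a' → a = a' := by
    intro i a a' h
    have := Subtype.ext (p := fun x => x ∈ C i) h
    exact EZ.injective ((EC i).symm.injective this)
  have hgSurj : ∀ i, ∀ L ∈ C i, ∃ a, gRaw i a = L := by
    intro i L hL
    refine ⟨EZ.symm (EC i ⟨L, hL⟩), ?_⟩
    simp [hgRaw]
  have hgProj : ∀ i a, IsProjLine (gRaw i a) := fun i a => hprojC (hgC i a)
  have hgNe : ∀ {i j a b}, i ≠ j → gRaw i a ≠ gRaw j b := fun hij => hclass_ne hij (hgC _ _) (hgC _ _)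
  -- intersection points of class-0 and class-1 lines
  have hmeet : ∀ a b : ZMod 3, ∃ p, p ∈ gRaw 0 a ∧ p ∈ gRaw 1 b :=
    fun a b => lines_meet (hgProj 0 a) (hgProj 1 b)
  set P : ZMod 3 → ZMod 3 → ProjPlane := fun a b => (hmeet a b).choose with hP
  have hP0 : ∀ a b, P a b ∈ gRaw 0 a := fun a b => (hmeet a b).choose_spec.1
  have hP1 : ∀ a b, P a b ∈ gRaw 1 b := fun a b => (hmeet a b).choose_spec.2
  have hex2 : ∀ a b, ∃! N, N ∈ C 2 ∧ P a b ∈ N := fun a b =>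
    hax 0 1 (by decide) (gRaw 0 a) (hgC 0 a) (gRaw 1 b) (hgC 1 b) (P a b) (hP0 a b) (hP1 a b) 2
  have hthird : ∀ a b : ZMod 3, ∃ c, P a b ∈ gRaw 2 c := by
    intro a b
    obtain ⟨N, ⟨hNC, hNp⟩, -⟩ := hex2 a b
    obtain ⟨c, rfl⟩ := hgSurj 2 N hNC
    exact ⟨c, hNp⟩
  set f : ZMod 3 → ZMod 3 → ZMod 3 := fun a b => (hthird a b).choose with hf
  have hfmem : ∀ a b, P a b ∈ gRaw 2 (f a b) := fun a b => (hthird a b).choose_spec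
  -- the only point on both gRaw 0 a and gRaw 1 b is P a b
  have hPuniq : ∀ p a b, p ∈ gRaw 0 a → p ∈ gRaw 1 b → p = P a b := fun p a b h0 h1 =>
    unique_pt (hgProj 0 a) (hgProj 1 b) (hgNe (by decide)) h0 h1 (hP0 a b) (hP1 a b)
  have hkey : ∀ p a b c, p ∈ gRaw 0 a → p ∈ gRaw 1 b → p ∈ gRaw 2 c → c = f a b := by
    intro p a b c h0 h1 h2
    have hp := hPuniq p a b h0 h1
    subst hp
    obtain ⟨N, -, hNuniq⟩ := hex2 a b
    have e1 := hNuniq (gRaw 2 c) ⟨hgC 2 c, h2⟩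
    have e2 := hNuniq (gRaw 2 (f a b)) ⟨hgC 2 (f a b), hfmem a b⟩
    exact hgInj 2 c (f a b) (e1.trans e2.symm)
  -- f is a latin square
  have hProw : ∀ a b b', b ≠ b' → P a b ≠ P a b' := by
    intro a b b' hbb heq
    refine B1 (hgC 1 b) (hgC 1 b') (fun h => hbb (hgInj 1 b b' h)) (hgC 0 a) (by decide)
      (hP1 a b) (heq ▸ hP1 a b') (hP0 a b)
  have hPcol : ∀ a a' b, a ≠ a' → P a b ≠ P a' b := by
    intro a a' b haa heq
    refine B1 (hgC 0 a) (hgC 0 a') (fun h => haa (hgInj 0 a a' h)) (hgC 1 b) (by decide)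
      (hP0 a b) (heq ▸ hP0 a' b) (hP1 a b)
  have hrow : ∀ a, Function.Injective (f a) := by
    intro a b b' h
    by_contra hbb
    have h1 : P a b ∈ gRaw 2 (f a b) := hfmem a b
    have h2 : P a b' ∈ gRaw 2 (f a b) := h ▸ hfmem a b'
    exact hProw a b b' hbb (unique_pt (hgProj 0 a) (hgProj 2 (f a b)) (hgNe (by decide))
      (hP0 a b) h1 (hP0 a b') h2)
  have hcol : ∀ b, Function.Injective (fun a => f a b) := by
    intro b a a' h
    simp only [] at h
    by_contra haa
    have h1 : P a b ∈ gRaw 2 (f a b) := hfmem a b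
    have h2 : P a' b ∈ gRaw 2 (f a b) := h ▸ hfmem a' b
    exact hPcol a a' b haa (unique_pt (hgProj 1 b) (hgProj 2 (f a b)) (hgNe (by decide))
      (hP1 a b) h1 (hP1 a' b) h2)
  obtain ⟨σ, τ, hσ, hτ, hστ⟩ := latin3 f hrow hcol
  -- the normalized net data
  set g : Fin 3 → ZMod 3 → Set ProjPlane :=
    ![fun a => gRaw 0 (σ a), fun b => gRaw 1 (τ b), fun c => gRaw 2 c] with hg
  have hgC' : ∀ i a, g i a ∈ C i := by
    intro i a
    fin_cases i <;> simp [hg] <;> exact hgC _ _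
  have hg0 : ∀ a, g 0 a = gRaw 0 (σ a) := fun a => by simp [hg]
  have hg1 : ∀ a, g 1 a = gRaw 1 (τ a) := fun a => by simp [hg]
  have hg2 : ∀ a, g 2 a = gRaw 2 a := fun a => by simp [hg]
  refine ⟨⟨g, ?_, ?_, ?_, ?_, ?_, ?_, ?_⟩⟩
  · intro i a; exact hprojC (hgC' i a)
  · intro i a; exact hsub i (hgC' i a)
  · intro i a j b h
    have hij : i = j := by
      by_contra hij
      exact hclass_ne hij (hgC' i a) (hgC' j b) h
    subst hij
    refine ⟨rfl, ?_⟩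
    fin_cases i <;> simp [hg] at h
    · exact hσ.injective (hgInj 0 _ _ h)
    · exact hτ.injective (hgInj 1 _ _ h)
    · exact hgInj 2 _ _ h
  · intro L hL
    obtain ⟨i, hLi⟩ := hcover L hL
    obtain ⟨a, ha⟩ := hgSurj i L hLi
    fin_cases i
    · obtain ⟨a', ha'⟩ := hσ.surjective a
      exact ⟨0, a', by rw [hg0, ha']; exact ha.symm⟩
    · obtain ⟨a', ha'⟩ := hτ.surjective a
      exact ⟨1, a', by rw [hg1, ha']; exact ha.symm⟩
    · exact ⟨2, a, by rw [hg2]; exact ha.symm⟩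
  · intro a b
    refine ⟨P (σ a) (τ b), ?_, ?_, ?_⟩
    · rw [hg0]; exact hP0 _ _
    · rw [hg1]; exact hP1 _ _
    · rw [hg2, ← hστ a b]; exact hfmem _ _
  · intro p a b c h0 h1 h2
    rw [hg0] at h0; rw [hg1] at h1; rw [hg2] at h2
    rw [hkey p (σ a) (τ b) c h0 h1 h2, hστ]
  · intro p i a a' haa h1 h2 j b hb
    by_cases e1 : g j b = g i a
    · left
      by_contra hcon
      have : j = i := by
        by_contra hij
        exact hclass_ne hij (hgC' j b) (hgC' i a) e1
      subst this
      apply hcon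
      refine ⟨rfl, ?_⟩
      fin_cases j <;> simp [hg] at e1 ⊢
      · exact hσ.injective (hgInj 0 _ _ e1)
      · exact hτ.injective (hgInj 1 _ _ e1)
      · exact hgInj 2 _ _ e1
    · by_cases e2 : g j b = g i a'
      · right
        have : j = i := by
          by_contra hij
          exact hclass_ne hij (hgC' j b) (hgC' i a') e2
        subst this
        refine ⟨rfl, ?_⟩
        fin_cases j <;> simp [hg] at e2 ⊢
        · exact hσ.injective (hgInj 0 _ _ e2)
        · exact hτ.injective (hgInj 1 _ _ e2)
        · exact hgInj 2 _ _ e2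
      · exfalso
        have hgne : g i a ≠ g i a' := by
          intro h
          apply haa
          fin_cases i <;> simp [hg] at h
          · exact hσ.injective (hgInj 0 _ _ h)
          · exact hτ.injective (hgInj 1 _ _ h)
          · exact hgInj 2 _ _ h
        exact hsame_raw (hgC' i a) (hgC' i a') hgne (hsub j (hgC' j b)) e1 e2 h1 h2 hb

lemma vertex_dis : ∀ t u u' : ZMod 3, u ≠ u' →
    (t - (-u - u') ≠ u + (t + (-u - u')) ∧ t - (-u - u') ≠ t - u ∧
      u + (t + (-u - u')) ≠ t - u) := by decide

lemma vertex_dis' : ∀ t u u' : ZMod 3, u ≠ u' →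
    (t - (-u - u') ≠ u' + (t + (-u - u')) ∧ t - (-u - u') ≠ t - u' ∧
      u' + (t + (-u - u')) ≠ t - u') := by decide

lemma vertexLines : ∀ t u u' U V : ZMod 3, u ≠ u' →
    t - (-u - u') ≠ U + (t + (-u - u')) → t - (-u - u') ≠ V → U + (t + (-u - u')) ≠ V →
    (U = u ∧ V = t - u) ∨ (U = u' ∧ V = t - u') := by decide

lemma vertex_ne (x y : ZMod 3) : (![e x, e y, 1] : Fin 3 → ℂ) ≠ 0 := by
  intro h
  have := congrFun h 2
  simp at this

lemma same_HL {p : ProjPlane} (t u u' U V : ZMod 3) (huu : u ≠ u')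
    (h1 : p ∈ HL u (t - u)) (h2 : p ∈ HL u' (t - u')) (h3 : p ∈ HL U V) :
    (U = u ∧ V = t - u) ∨ (U = u' ∧ V = t - u') := by
  obtain ⟨d1, d2, d3⟩ := vertex_dis t u u' huu
  obtain ⟨d1', d2', d3'⟩ := vertex_dis' t u u' huu
  set w : Fin 3 → ℂ := ![e (t - (-u - u')), e (t + (-u - u')), 1] with hwdef
  have hw0 : w 0 = e (t - (-u - u')) := rfl
  have hw1 : w 1 = e (t + (-u - u')) := rfl
  have hw2 : w 2 = 1 := rfl
  have hwne : w ≠ 0 := vertex_ne _ _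
  have hm1 : Projectivization.mk ℂ w hwne ∈ HL u (t - u) := by
    rw [mem_HL_mk, hw0, hw1, hw2]
    have hz := (esum (t - (-u - u')) (u + (t + (-u - u'))) (t - u)).mpr ⟨d1, d2, d3⟩
    have ha := e_add u (t + (-u - u'))
    linear_combination hz - ha
  have hm2 : Projectivization.mk ℂ w hwne ∈ HL u' (t - u') := by
    rw [mem_HL_mk, hw0, hw1, hw2]
    have hz := (esum (t - (-u - u')) (u' + (t + (-u - u'))) (t - u')).mpr ⟨d1', d2', d3'⟩
    have ha := e_add u' (t + (-u - u'))
    linear_combination hz - ha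
  have hlines : HL u (t - u) ≠ HL u' (t - u') := fun h => huu (HL_inj h).1
  have hpw : p = Projectivization.mk ℂ w hwne :=
    unique_pt (isProjLine_HL _ _) (isProjLine_HL _ _) hlines h1 h2 hm1 hm2
  rw [hpw, mem_HL_mk, hw0, hw1, hw2] at h3
  have ha := e_add U (t + (-u - u'))
  have hz : e (t - (-u - u')) + e (U + (t + (-u - u'))) + e V = 0 := by
    linear_combination h3 + ha
  obtain ⟨e1, e2, e3⟩ := (esum _ _ _).mp hz
  exact vertexLines t u u' U V huu e1 e2 e3

lemma wR_ne (a : ZMod 3) : (![0, 1, -(e a)] : Fin 3 → ℂ) ≠ 0 := by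
  intro h
  have := congrFun h 1
  simp at this

lemma zid1 : ∀ b : ZMod 3, b + b = -b := by decide
lemma zid2 : ∀ a : ZMod 3, 1 + (a + 1) + a = -(a + 1) := by decide
lemma zid2b : ∀ a : ZMod 3, 1 + a + 1 + a = -1 - a := by decide
lemma zid3 : ∀ a : ZMod 3, 2 - (a + (a + 1)) + a = a + (a + 1) := by decide
lemma zid4 : ∀ a : ZMod 3, (1 : ZMod 3) + (a + 2) = a := by decide
lemma zid5 : ∀ a : ZMod 3, (2 : ZMod 3) - (a + (a + 2)) = a := by decide
lemma zid6 : ∀ a c : ZMod 3, ¬(-a = c ∧ a = 2 - c) := by decide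
lemma zid7 : ∀ a b : ZMod 3, ¬(-a = a + b ∧ a = 2 - (a + b)) := by decide

noncomputable def hesseNetData : NetData Hesse9 := by
  classical
  set Bf : Fin 3 → ZMod 3 → ZMod 3 :=
    ![fun a => -a, fun b => -b, fun c => c] with hBf
  set Gf : Fin 3 → ZMod 3 → ZMod 3 :=
    ![fun a => a, fun b => 1 + b, fun c => 2 - c] with hGf
  set T : Fin 3 → ZMod 3 := ![0, 1, 2] with hT
  set g : Fin 3 → ZMod 3 → Set ProjPlane := fun i a => HL (Bf i a) (Gf i a) with hgdef
  have hg0 : ∀ a, g 0 a = HL (-a) a := fun a => rfl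
  have hg1 : ∀ b, g 1 b = HL (-b) (1 + b) := fun b => rfl
  have hg2 : ∀ c, g 2 c = HL c (2 - c) := fun c => rfl
  have hkeyG : ∀ i a, Gf i a = T i - Bf i a := by
    intro i a
    fin_cases i <;> simp [hBf, hGf, hT] <;> ring
  have hBfinj : ∀ (i : Fin 3), Function.Injective (Bf i) := by
    intro i x y h
    fin_cases i <;> simp [hBf] at h <;> exact h
  have hBGinj : ∀ (i : Fin 3) a (j : Fin 3) b, Bf i a = Bf j b → Gf i a = Gf j b →
      i = j ∧ a = b := by
    intro i a j b
    fin_cases i <;> fin_cases j <;> simp [hBf, hGf] <;> revert a b <;> decide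
  have hinj : ∀ (i : Fin 3) a (j : Fin 3) b, g i a = g j b → i = j ∧ a = b := by
    intro i a j b h
    rw [hgdef] at h
    obtain ⟨h1, h2⟩ := HL_inj h
    exact hBGinj i a j b h1 h2
  -- triple points
  have htriple : ∀ a b, ∃ p, p ∈ g 0 a ∧ p ∈ g 1 b ∧ p ∈ g 2 (a + b) := by
    intro a b
    rw [hg0, hg1, hg2]
    have smv : ∀ u v : ZMod 3, ∀ x y z : ℂ, ∀ hne,
        (Projectivization.mk ℂ ![x, y, z] hne ∈ HL u v ↔ x + e u * y + e v * z = 0) := by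
      intro u v x y z hne
      rw [mem_HL_mk]
      simp only [Matrix.cons_val_zero, Matrix.cons_val_one, Matrix.head_cons,
        Matrix.cons_val_two, Matrix.tail_cons]
    rcases zmod3_cases (b - a) with h | h | h
    · -- b = a
      have hb : b = a := by linear_combination h
      subst hb
      refine ⟨Projectivization.mk ℂ ![-(e (-b)), 1, 0]
        (by intro hh; have := congrFun hh 1; simp at this), ?_, ?_, ?_⟩ <;> rw [smv]
      · ring
      · ring
      · have h2 := e_eq (zid1 b)
        linear_combination h2
    · -- b = a + 1
      have hb : b = a + 1 := by linear_combination h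
      subst hb
      refine ⟨Projectivization.mk ℂ ![0, 1, -(e a)] (wR_ne a), ?_, ?_, ?_⟩ <;> rw [smv]
      · have h1 := e_add a a
        have h2 := e_eq (zid1 a)
        linear_combination h1 - h2
      · have h1 := e_add (1 + (a + 1)) a
        have h2 := e_eq (zid2 a)
        linear_combination h1 - h2
      · have h1 := e_add (2 - (a + (a + 1))) a
        have h2 := e_eq (zid3 a)
        linear_combination h1 - h2
    · -- b = a + 2
      have hb : b = a + 2 := by linear_combination h
      subst hb
      refine ⟨Projectivization.mk ℂ ![-(e a), 0, 1] (pt2_ne a), ?_, ?_, ?_⟩ <;> rw [smv]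
      · ring
      · have h2 := e_eq (zid4 a)
        linear_combination h2
      · have h2 := e_eq (zid5 a)
        linear_combination h2
  refine ⟨g, ?_, ?_, hinj, ?_, htriple, ?_, ?_⟩
  · intro i a
    rw [hgdef]
    exact isProjLine_HL _ _
  · intro i a
    rw [hgdef, hesse9_eq]
    exact Finset.mem_image.mpr ⟨(Bf i a, Gf i a), Finset.mem_univ _, rfl⟩
  · -- surj
    intro L hL
    rw [hesse9_eq] at hL
    obtain ⟨⟨u, v⟩, -, rfl⟩ := Finset.mem_image.mp hL
    rcases zmod3_cases (u + v) with h | h | h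
    · refine ⟨0, -u, ?_⟩
      rw [hg0, neg_neg]
      have hv : v = -u := by linear_combination h
      rw [hv]
    · refine ⟨1, -u, ?_⟩
      rw [hg1, neg_neg]
      have hv : v = 1 + -u := by linear_combination h
      rw [hv]
    · refine ⟨2, u, ?_⟩
      rw [hg2]
      have hv : v = 2 - u := by linear_combination h
      rw [hv]
  · -- conc
    intro p a b c h0 h1 h2
    by_contra hc
    obtain ⟨w, hw0, hw1, hw2⟩ := htriple a b
    have hne01 : g 0 a ≠ g 1 b := by
      intro hh
      obtain ⟨hh1, -⟩ := hinj 0 a 1 b hh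
      simp at hh1
    have hpw : p = w := unique_pt (isProjLine_HL _ _) (isProjLine_HL _ _)
      (by rw [hg0, hg1] at hne01; exact hne01) (hg0 a ▸ h0) (hg1 b ▸ h1)
      (hg0 a ▸ hw0) (hg1 b ▸ hw1)
    subst hpw
    have hcc : c ≠ a + b := hc
    have h2' : p ∈ HL c (2 - c) := hg2 c ▸ h2
    have hw2' : p ∈ HL (a + b) (2 - (a + b)) := hg2 (a + b) ▸ hw2
    have h0' : p ∈ HL (-a) a := hg0 a ▸ h0
    rcases same_HL 2 c (a + b) (-a) a hcc h2' hw2' h0' with ⟨e1, e2⟩ | ⟨e1, e2⟩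
    · exact zid6 a c ⟨e1, e2⟩
    · exact zid7 a b ⟨e1, e2⟩
  · -- same
    intro p i a a' haa h1 h2 j b hb
    have hBne : Bf i a ≠ Bf i a' := fun hh => haa (hBfinj i hh)
    have m1 : p ∈ HL (Bf i a) (T i - Bf i a) := by
      rw [← hkeyG]; exact h1
    have m2 : p ∈ HL (Bf i a') (T i - Bf i a') := by
      rw [← hkeyG]; exact h2
    have m3 : p ∈ HL (Bf j b) (Gf j b) := hb
    rcases same_HL (T i) (Bf i a) (Bf i a') (Bf j b) (Gf j b) hBne m1 m2 m3 with
      ⟨e1, e2⟩ | ⟨e1, e2⟩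
    · left
      obtain ⟨x, y⟩ := hBGinj j b i a e1 (by rw [e2, hkeyG i a])
      exact ⟨x, y⟩
    · right
      obtain ⟨x, y⟩ := hBGinj j b i a' e1 (by rw [e2, hkeyG i a'])
      exact ⟨x, y⟩

end Aux

/-- Any two (3,3)-nets with exactly 9 double points are lattice isomorphic,
and their common lattice is that of the Hesse arrangement. -/
theorem statement2 (A B : Finset (Set ProjPlane))
    (CA CB : Fin 3 → Finset (Set ProjPlane))
    (hA : IsNet 3 3 A CA) (hB : IsNet 3 3 B CB)
    (hAd : {p : ProjPlane | mult A p = 2}.ncard = 9)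
    (hBd : {p : ProjPlane | mult B p = 2}.ncard = 9) :
    LatticeIso A B ∧ LatticeIso A Hesse9 := by
  obtain ⟨dA⟩ := netData_of_net A CA hA hAd
  obtain ⟨dB⟩ := netData_of_net B CB hB hBd
  exact ⟨latticeIso_of_netData dA dB, latticeIso_of_netData dA hesseNetData⟩
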